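/- The theta-type series H(y) = Σ_{k≥1} exp(−π²(2k−1)²y/2) satisfies 2H(y)√(2πy) → 1 as y ↓ 0. -/

import Mathlib

open Real Filter

lemma aux_hasSum (y : ℝ) (hy : 0 < y) :
    HasSum (fun k : ℕ => 2 * Real.exp (-(π ^ 2 * (2 * (k : ℝ) + 1) ^ 2 * y) / 2))
      (HurwitzZeta.evenKernel ((1 / 2 : ℝ) : UnitAddCircle) (2 * π * y)) := by
  have ht : (0 : ℝ) < 2 * π * y := by positivity
  have h := (HurwitzZeta.hasSum_int_evenKernel (1 / 2 : ℝ) ht).nat_add_neg_add_one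
  refine h.congr_fun fun n => ?_
  push_cast
  rw [show -π * (((n : ℝ)) + 1 / 2) ^ 2 * (2 * π * y)
        = -(π ^ 2 * (2 * (n : ℝ) + 1) ^ 2 * y) / 2 from by ring,
      show -π * ((-((n : ℝ) + 1)) + 1 / 2) ^ 2 * (2 * π * y)
        = -(π ^ 2 * (2 * (n : ℝ) + 1) ^ 2 * y) / 2 from by ring]
  ring

theorem aux_cos_tendsto :
    Tendsto (HurwitzZeta.cosKernel ((1 / 2 : ℝ) : UnitAddCircle)) atTop (nhds 1) := by
  obtain ⟨p, hp, hbig⟩ := HurwitzZeta.isBigO_atTop_cosKernel_sub ((1 / 2 : ℝ) : UnitAddCircle)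
  have h0 : Tendsto (fun x : ℝ => Real.exp (-p * x)) atTop (nhds 0) := by
    have h1 : Tendsto (fun x : ℝ => p * x) atTop atTop :=
      Tendsto.const_mul_atTop hp tendsto_id
    have h2 := Real.tendsto_exp_neg_atTop_nhds_zero.comp h1
    simpa [Function.comp_def, neg_mul] using h2
  have h1 := hbig.trans_tendsto h0
  have h2 := h1.add_const 1
  simpa using h2

/-- The theta-type series `H(y) = ∑_{k≥1} exp(−π²(2k−1)²y/2)` satisfies
`2 H(y) √(2πy) → 1` as `y ↓ 0`. -/
theorem stmt_8
    (H : ℝ → ℝ)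
    (hH : ∀ y, H y = ∑' k : ℕ, Real.exp (-(π ^ 2 * (2 * (k : ℝ) + 1) ^ 2 * y) / 2)) :
    Tendsto (fun y => 2 * H y * Real.sqrt (2 * π * y))
      (nhdsWithin 0 (Set.Ioi 0)) (nhds 1) := by
  have key : ∀ y ∈ Set.Ioi (0 : ℝ),
      2 * H y * Real.sqrt (2 * π * y)
        = HurwitzZeta.cosKernel ((1 / 2 : ℝ) : UnitAddCircle) (1 / (2 * π * y)) := by
    intro y hy
    have hy' : (0 : ℝ) < y := hy
    have ht : (0 : ℝ) < 2 * π * y := by positivity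
    have hs := aux_hasSum y hy'
    have h2 : 2 * H y = HurwitzZeta.evenKernel ((1 / 2 : ℝ) : UnitAddCircle) (2 * π * y) := by
      rw [hH y, ← tsum_mul_left, hs.tsum_eq]
    rw [h2, HurwitzZeta.evenKernel_functional_equation, Real.sqrt_eq_rpow]
    have hne : (2 * π * y) ^ ((1 : ℝ) / 2) ≠ 0 := by positivity
    rw [div_mul_eq_mul_div, one_mul, div_mul_cancel₀ _ hne]
  have h1 : Tendsto (fun y : ℝ => 1 / (2 * π * y)) (nhdsWithin 0 (Set.Ioi 0)) atTop := by
    have h2 : Tendsto (fun y : ℝ => 2 * π * y) (nhdsWithin 0 (Set.Ioi 0))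
        (nhdsWithin 0 (Set.Ioi 0)) := by
      apply tendsto_nhdsWithin_of_tendsto_nhds_of_eventually_within
      · have hc : Tendsto (fun y : ℝ => 2 * π * y) (nhds 0) (nhds 0) := by
          simpa using (continuous_mul_left (2 * π)).tendsto (0 : ℝ)
        exact hc.mono_left nhdsWithin_le_nhds
      · filter_upwards [self_mem_nhdsWithin] with y hy
        simp only [Set.mem_Ioi] at hy ⊢
        positivity
    have h3 := tendsto_inv_nhdsGT_zero.comp h2
    rw [show (fun y : ℝ => 1 / (2 * π * y)) = (fun x : ℝ => x⁻¹) ∘ (fun y : ℝ => 2 * π * y)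
      from by ext y; simp [one_div]]
    exact h3
  have h3 := aux_cos_tendsto.comp h1
  exact h3.congr' (eventually_nhdsWithin_of_forall fun y hy => (key y hy).symm)
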